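/- arXiv:2509.22482 — 2 statements merged into one kernel-verified Lean document; each statement's English description precedes it below -/
import Mathlib

section
/- Let K_ZZ ∈ ℝ^{M×M} be symmetric positive definite, K_ZX ∈ ℝ^{M×N}, and σ² > 0. Define the Nyström matrix R = K_ZXᵀ K_ZZ⁻¹ K_ZX and C̃ = K_ZX K_ZXᵀ + σ² K_ZZ. Then K_ZXᵀ C̃⁻¹ K_ZX = R (R + σ² I_N)⁻¹, equivalently the sparse GP weight formula k_Z(x)ᵀ C̃⁻¹ K_ZX Yᵀ agrees with Nyström-approximate GP regression. -/
open Matrix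

lemma posDef_smul_aux {n : ℕ} {A : Matrix (Fin n) (Fin n) ℝ} (hA : A.PosDef)
    {c : ℝ} (hc : 0 < c) : (c • A).PosDef := by
  refine ⟨?_, fun x hx => ?_⟩
  · show (c • A)ᴴ = c • A
    rw [conjTranspose_smul, hA.1.eq]
    simp
  have h := mul_pos hc (hA.2 hx)
  convert h using 1
  simp only [Finsupp.mul_sum, Matrix.smul_apply, smul_eq_mul]
  congr 1; ext i a; congr 1; ext j b; ring

/-- The sparse GP (VFE) posterior-mean identity:
`K_ZXᵀ C̃⁻¹ K_ZX = R (R + σ² I_N)⁻¹` with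
`R = K_ZXᵀ K_ZZ⁻¹ K_ZX` and `C̃ = K_ZX K_ZXᵀ + σ² K_ZZ`. -/
theorem vfe_nystrom_identity {M N : ℕ}
    (KZZ : Matrix (Fin M) (Fin M) ℝ) (hKZZ : KZZ.PosDef)
    (KZX : Matrix (Fin M) (Fin N) ℝ) (σ2 : ℝ) (hσ : 0 < σ2) :
    KZXᵀ * (KZX * KZXᵀ + σ2 • KZZ)⁻¹ * KZX =
      (KZXᵀ * KZZ⁻¹ * KZX) *
        (KZXᵀ * KZZ⁻¹ * KZX + σ2 • (1 : Matrix (Fin N) (Fin N) ℝ))⁻¹ := by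
  set C := KZX * KZXᵀ + σ2 • KZZ with hC
  set R := KZXᵀ * KZZ⁻¹ * KZX with hR
  have hKZXt : KZXᵀ = KZXᴴ := by
    ext i j; simp [conjTranspose]
  have hCpd : C.PosDef := by
    refine Matrix.PosDef.posSemidef_add ?_ (posDef_smul_aux hKZZ hσ)
    rw [hKZXt]
    exact Matrix.posSemidef_self_mul_conjTranspose KZX
  have hRpsd : R.PosSemidef := by
    have := (hKZZ.inv.posSemidef).conjTranspose_mul_mul_same KZX
    rwa [← hKZXt] at this
  have hSpd : (R + σ2 • (1 : Matrix (Fin N) (Fin N) ℝ)).PosDef :=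
    Matrix.PosDef.posSemidef_add hRpsd (posDef_smul_aux Matrix.PosDef.one hσ)
  have hKunit : IsUnit KZZ.det := hKZZ.det_pos.ne'.isUnit
  have hCunit : IsUnit C.det := hCpd.det_pos.ne'.isUnit
  have hSunit : IsUnit (R + σ2 • (1 : Matrix (Fin N) (Fin N) ℝ)).det :=
    hSpd.det_pos.ne'.isUnit
  -- key: C * KZZ⁻¹ * KZX = KZX * (R + σ2 • 1)
  have key : C * (KZZ⁻¹ * KZX) = KZX * (R + σ2 • 1) := by
    have e1 : KZZ * (KZZ⁻¹ * KZX) = KZX := by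
      rw [← Matrix.mul_assoc, Matrix.mul_nonsing_inv _ hKunit, Matrix.one_mul]
    rw [hC, hR, Matrix.add_mul, Matrix.smul_mul, e1, Matrix.mul_add, Matrix.mul_smul,
      Matrix.mul_one]
    simp [Matrix.mul_assoc]
  have key2 : C⁻¹ * (KZX * (R + σ2 • 1)) = KZZ⁻¹ * KZX := by
    rw [← key, ← Matrix.mul_assoc, Matrix.nonsing_inv_mul _ hCunit, Matrix.one_mul]
  have main : KZXᵀ * C⁻¹ * KZX * (R + σ2 • 1) = R := by
    rw [Matrix.mul_assoc, Matrix.mul_assoc, key2, hR, Matrix.mul_assoc]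
  calc KZXᵀ * C⁻¹ * KZX
      = KZXᵀ * C⁻¹ * KZX * ((R + σ2 • 1) * (R + σ2 • 1)⁻¹) := by
        rw [Matrix.mul_nonsing_inv _ hSunit, Matrix.mul_one]
    _ = R * (R + σ2 • 1)⁻¹ := by rw [← Matrix.mul_assoc, main]
end

section
/- Let K_ZZ ∈ ℝ^{M×M} be symmetric positive definite, K_ZX ∈ ℝ^{M×N}, σ² > 0, and define B̃ = K_ZZ⁻¹ − σ²(K_ZX K_ZXᵀ + σ² K_ZZ)⁻¹. Then B̃ is symmetric positive semidefinite. -/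
open Matrix

lemma psd_smul_aux {m : ℕ} {A : Matrix (Fin m) (Fin m) ℝ} (hA : A.PosSemidef)
    {c : ℝ} (hc : 0 ≤ c) : (c • A).PosSemidef := by
  refine posSemidef_iff_dotProduct_mulVec.mpr ⟨?_, fun x => ?_⟩
  · unfold Matrix.IsHermitian
    rw [conjTranspose_smul, hA.1]
    simp
  · rw [smul_mulVec, dotProduct_smul, smul_eq_mul]
    exact mul_nonneg hc (hA.dotProduct_mulVec_nonneg x)

lemma pd_smul_aux {m : ℕ} {A : Matrix (Fin m) (Fin m) ℝ} (hA : A.PosDef)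
    {c : ℝ} (hc : 0 < c) : (c • A).PosDef := by
  refine posDef_iff_dotProduct_mulVec.mpr ⟨?_, fun x hx => ?_⟩
  · unfold Matrix.IsHermitian
    rw [conjTranspose_smul, hA.1]
    simp
  · rw [smul_mulVec, dotProduct_smul, smul_eq_mul]
    exact mul_pos hc ((posDef_iff_dotProduct_mulVec.mp hA).2 hx)

/-- The information-gain weight matrix
`B̃ = K_ZZ⁻¹ − σ²(K_ZX K_ZXᵀ + σ² K_ZZ)⁻¹` is symmetric positive semidefinite. -/
theorem information_gain_psd {M N : ℕ}
    (KZZ : Matrix (Fin M) (Fin M) ℝ) (hKZZ : KZZ.PosDef)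
    (KZX : Matrix (Fin M) (Fin N) ℝ) (σ2 : ℝ) (hσ : 0 < σ2) :
    (KZZ⁻¹ - σ2 • (KZX * KZXᵀ + σ2 • KZZ)⁻¹).PosSemidef := by
  set A : Matrix (Fin M) (Fin M) ℝ := KZX * KZXᵀ with hAdef
  have hct : KZXᴴ = KZXᵀ := by ext i j; simp
  have hA : A.PosSemidef := by
    have := posSemidef_self_mul_conjTranspose KZX
    rwa [hct] at this
  set S : Matrix (Fin M) (Fin M) ℝ := A + σ2 • KZZ with hSdef
  have hS : S.PosDef := Matrix.PosDef.posSemidef_add hA (pd_smul_aux hKZZ hσ)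
  have hSdet : IsUnit S.det := hS.det_pos.ne'.isUnit
  have hKdet : IsUnit KZZ.det := hKZZ.det_pos.ne'.isUnit
  haveI : Invertible S := S.invertibleOfIsUnitDet hSdet
  haveI : Invertible KZZ := KZZ.invertibleOfIsUnitDet hKdet
  have hKi : KZZ⁻¹ * KZZ = 1 := nonsing_inv_mul KZZ hKdet
  have hiS : S * S⁻¹ = 1 := mul_nonsing_inv S hSdet
  -- the core matrix C = A K⁻¹ A + σ2 A is PSD
  have hC : (A * KZZ⁻¹ * A + σ2 • A).PosSemidef := by
    have h1 : (A * KZZ⁻¹ * A).PosSemidef := by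
      have := hKZZ.posSemidef.inv.mul_mul_conjTranspose_same A
      rwa [hA.1.eq] at this
    exact h1.add (psd_smul_aux hA hσ.le)
  -- C = A K⁻¹ S
  have hC1 : A * KZZ⁻¹ * A + σ2 • A = A * KZZ⁻¹ * S := by
    rw [hSdef, Matrix.mul_add, Matrix.mul_smul, Matrix.mul_assoc A KZZ⁻¹ KZZ, hKi, Matrix.mul_one]
  -- A K⁻¹ S = S K⁻¹ S - σ2 S
  have hC2 : A * KZZ⁻¹ * S = S * KZZ⁻¹ * S - σ2 • S := by
    have : S * KZZ⁻¹ * S = A * KZZ⁻¹ * S + σ2 • S := by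
      rw [hSdef]
      simp only [Matrix.add_mul, Matrix.smul_mul, Matrix.mul_assoc,
        Matrix.mul_inv_cancel_left_of_invertible]
    rw [this]; abel
  -- key algebraic identity
  have hkey : KZZ⁻¹ - σ2 • S⁻¹ = S⁻¹ * (A * KZZ⁻¹ * A + σ2 • A) * S⁻¹ := by
    rw [hC1, hC2]
    simp only [Matrix.sub_mul, Matrix.mul_sub, Matrix.smul_mul, Matrix.mul_smul,
      Matrix.mul_assoc, Matrix.inv_mul_cancel_left_of_invertible,
      Matrix.mul_inv_cancel_left_of_invertible, hiS, Matrix.mul_one]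
  rw [hkey]
  have := hC.mul_mul_conjTranspose_same S⁻¹
  rwa [(hS.inv.isHermitian).eq] at this
end
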